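/- Let T be a measure-preserving (not necessarily ergodic) transformation of a probability space (X, F, μ). For E ∈ F define 1_E*(x) = liminf_{n→∞} (1/n) · #{0 ≤ i < n : T^i x ∈ E}. Then for any E ∈ F with μ(E) > 0, one has 1_E*(x) > 0 for μ-a.e. x ∈ E. -/

import Mathlib

open MeasureTheory Filter Classical

set_option linter.unusedSectionVars false
set_option maxHeartbeats 800000

noncomputable section PFRAux

variable {X : Type*} [MeasurableSpace X]

/-- Birkhoff sums. -/
def pfrBirk (T : X → X) (g : X → ℝ) (n : ℕ) (x : X) : ℝ :=
  ∑ i ∈ Finset.range n, g (T^[i] x)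

/-- Running maxima of Birkhoff sums (including the empty sum `0`). -/
def pfrMax (T : X → X) (g : X → ℝ) : ℕ → X → ℝ
  | 0, _ => 0
  | N + 1, x => max (pfrMax T g N x) (pfrBirk T g (N + 1) x)

lemma pfrBirk_succ' (T : X → X) (g : X → ℝ) (n : ℕ) (x : X) :
    pfrBirk T g (n + 1) x = g x + pfrBirk T g n (T x) := by
  simp only [pfrBirk, Finset.sum_range_succ']
  simp [Function.iterate_succ_apply, add_comm]

lemma pfrBirk_le_pfrMax (T : X → X) (g : X → ℝ) {k N : ℕ} (h : k ≤ N) (x : X) :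
    pfrBirk T g k x ≤ pfrMax T g N x := by
  induction N with
  | zero => interval_cases k; simp [pfrBirk, pfrMax]
  | succ N ih =>
    rcases Nat.lt_or_ge k (N + 1) with hk | hk
    · exact le_trans (ih (Nat.lt_succ_iff.mp hk)) (le_max_left _ _)
    · have : k = N + 1 := le_antisymm h hk
      subst this; exact le_max_right _ _

lemma pfrMax_nonneg (T : X → X) (g : X → ℝ) (N : ℕ) (x : X) :
    0 ≤ pfrMax T g N x := by
  have := pfrBirk_le_pfrMax T g (Nat.zero_le N) x
  simpa [pfrBirk] using this

lemma pfrMax_eq_birk (T : X → X) (g : X → ℝ) (N : ℕ) (x : X) :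
    ∃ k ≤ N, pfrMax T g N x = pfrBirk T g k x := by
  induction N with
  | zero => exact ⟨0, le_rfl, by simp [pfrMax, pfrBirk]⟩
  | succ N ih =>
    rcases ih with ⟨k, hk, he⟩
    rcases max_cases (pfrMax T g N x) (pfrBirk T g (N + 1) x) with ⟨h1, _⟩ | ⟨h1, _⟩
    · exact ⟨k, hk.trans (Nat.le_succ N), by rw [pfrMax]; rw [h1, he]⟩
    · exact ⟨N + 1, le_rfl, by rw [pfrMax]; rw [h1]⟩

lemma pfrMax_key (T : X → X) (g : X → ℝ) (N : ℕ) (x : X)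
    (hpos : 0 < pfrMax T g N x) :
    pfrMax T g N x ≤ g x + pfrMax T g N (T x) := by
  obtain ⟨k, hk, he⟩ := pfrMax_eq_birk T g N x
  rcases k with _ | j
  · simp [pfrBirk] at he; rw [he] at hpos; exact absurd hpos (lt_irrefl 0)
  · rw [he, pfrBirk_succ']
    exact add_le_add le_rfl (pfrBirk_le_pfrMax T g (Nat.le_of_succ_le hk) (T x))

lemma measurable_pfrBirk {T : X → X} {g : X → ℝ} (hT : Measurable T)
    (hg : Measurable g) (n : ℕ) : Measurable (pfrBirk T g n) :=
  Finset.measurable_sum _ fun i _ => hg.comp (hT.iterate i)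

lemma measurable_pfrMax {T : X → X} {g : X → ℝ} (hT : Measurable T)
    (hg : Measurable g) (N : ℕ) : Measurable (pfrMax T g N) := by
  induction N with
  | zero => exact measurable_const
  | succ N ih => exact ih.max (measurable_pfrBirk hT hg (N + 1))

lemma pfrMax_mono (T : X → X) (g : X → ℝ) {N M : ℕ} (h : N ≤ M) (x : X) :
    pfrMax T g N x ≤ pfrMax T g M x := by
  induction M with
  | zero => interval_cases N; exact le_rfl
  | succ M ih =>
    rcases Nat.lt_or_ge N (M + 1) with hk | hk
    · exact le_trans (ih (Nat.lt_succ_iff.mp hk)) (le_max_left _ _)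
    · have : N = M + 1 := le_antisymm h hk
      subst this; exact le_rfl


/-- Finite maximal ergodic inequality. -/
lemma pfr_maximal {μ : Measure X} [IsProbabilityMeasure μ] {T : X → X}
    (hT : MeasurePreserving T μ μ) {g : X → ℝ} (hg : Measurable g)
    {C : ℝ} (hC : 0 ≤ C) (hb : ∀ x, |g x| ≤ C) (N : ℕ) :
    0 ≤ ∫ x in {x | 0 < pfrMax T g N x}, g x ∂μ := by
  set H : X → ℝ := pfrMax T g N with hH
  set M : Set X := {x | 0 < H x} with hMdef
  have hMeasH : Measurable H := measurable_pfrMax hT.measurable hg N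
  have hM : MeasurableSet M := measurableSet_lt measurable_const hMeasH
  -- bounds
  have hHb : ∀ x, |H x| ≤ (N : ℝ) * C := by
    intro x
    rw [abs_le]
    constructor
    · linarith [pfrMax_nonneg T g N x, mul_nonneg (Nat.cast_nonneg N) hC]
    · obtain ⟨k, hk, he⟩ := pfrMax_eq_birk T g N x
      rw [hH, (he : pfrMax T g N x = pfrBirk T g k x)]
      calc pfrBirk T g k x ≤ ∑ i ∈ Finset.range k, |g (T^[i] x)| := by
            exact Finset.sum_le_sum fun i _ => le_abs_self _
        _ ≤ ∑ i ∈ Finset.range k, C := Finset.sum_le_sum fun i _ => hb _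
        _ = (k : ℝ) * C := by simp [mul_comm]
        _ ≤ (N : ℝ) * C := by
            apply mul_le_mul_of_nonneg_right _ hC
            exact_mod_cast hk
  have hIntg : Integrable g μ :=
    Integrable.mono' (integrable_const C) hg.aestronglyMeasurable (ae_of_all _ hb)
  have hIntH : Integrable H μ :=
    Integrable.mono' (integrable_const ((N : ℝ) * C)) hMeasH.aestronglyMeasurable
      (ae_of_all _ hHb)
  have hIntHT : Integrable (fun x => H (T x)) μ :=
    Integrable.mono' (integrable_const ((N : ℝ) * C))
      (hMeasH.comp hT.measurable).aestronglyMeasurable (ae_of_all _ fun x => hHb (T x))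
  have step1 : ∫ x in M, (H x - H (T x)) ∂μ ≤ ∫ x in M, g x ∂μ := by
    apply setIntegral_mono_on ((hIntH.sub hIntHT).integrableOn) (hIntg.integrableOn) hM
    intro x hx
    have := pfrMax_key T g N x hx
    simp only [hH, Pi.sub_apply]
    linarith
  have step2 : ∫ x in M, (H x - H (T x)) ∂μ
      = ∫ x in M, H x ∂μ - ∫ x in M, H (T x) ∂μ :=
    integral_sub hIntH.integrableOn hIntHT.integrableOn
  have step3 : ∫ x in M, H x ∂μ = ∫ x, H x ∂μ := by
    apply setIntegral_eq_integral_of_forall_compl_eq_zero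
    intro x hx
    have h1 : ¬ 0 < H x := hx
    exact le_antisymm (not_lt.mp h1) (pfrMax_nonneg T g N x)
  have step4 : ∫ x in M, H (T x) ∂μ ≤ ∫ x, H (T x) ∂μ :=
    setIntegral_le_integral hIntHT (ae_of_all _ fun x => pfrMax_nonneg T g N (T x))
  have step5 : ∫ x, H (T x) ∂μ = ∫ x, H x ∂μ := by
    rw [← MeasureTheory.integral_map hT.measurable.aemeasurable
      hMeasH.aestronglyMeasurable, hT.map_eq]
  linarith

/-- Visit-count up to time `n`. -/
def pfrCount (T : X → X) (E : Set X) (n : ℕ) (x : X) : ℝ :=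
  (((Finset.range n).filter (fun i => T^[i] x ∈ E)).card : ℝ)

lemma pfrCount_eq_sum (T : X → X) (E : Set X) (n : ℕ) (x : X) :
    pfrCount T E n x = ∑ i ∈ Finset.range n, (if T^[i] x ∈ E then (1 : ℝ) else 0) := by
  rw [pfrCount, Finset.card_filter]
  push_cast
  rfl

lemma pfrCount_succ' (T : X → X) (E : Set X) (n : ℕ) (x : X) :
    pfrCount T E (n + 1) x = (if x ∈ E then (1:ℝ) else 0) + pfrCount T E n (T x) := by
  rw [pfrCount_eq_sum, pfrCount_eq_sum, Finset.sum_range_succ']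
  simp only [Function.iterate_succ_apply, Function.iterate_zero, id_eq]; exact add_comm _ _

lemma pfrCount_nonneg (T : X → X) (E : Set X) (n : ℕ) (x : X) : 0 ≤ pfrCount T E n x :=
  Nat.cast_nonneg _

lemma pfrCount_mono_le (T : X → X) (E : Set X) (n : ℕ) (x : X) :
    pfrCount T E n (T x) ≤ pfrCount T E (n + 1) x := by
  rw [pfrCount_succ']
  split <;> linarith

lemma pfrCount_succ_le (T : X → X) (E : Set X) (n : ℕ) (x : X) :
    pfrCount T E (n + 1) x ≤ pfrCount T E n (T x) + 1 := by
  rw [pfrCount_succ']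
  split <;> linarith

lemma measurable_pfrCount {T : X → X} (hT : Measurable T) {E : Set X}
    (hE : MeasurableSet E) (n : ℕ) : Measurable (pfrCount T E n) := by
  have he : pfrCount T E n = fun x => ∑ i ∈ Finset.range n,
      (if T^[i] x ∈ E then (1 : ℝ) else 0) := funext (pfrCount_eq_sum T E n)
  rw [he]
  exact Finset.measurable_sum _ fun i _ =>
    Measurable.ite ((hT.iterate i) hE) measurable_const measurable_const

/-- The "bad" set of points visiting `E` with lower frequency zero. -/
def pfrBad (T : X → X) (E : Set X) : Set X :=
  {x | ∀ ε : ℝ, 0 < ε → ∃ᶠ n in atTop, pfrCount T E n x < ε * n}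

lemma pfrBad_fwd (T : X → X) (E : Set X) {x : X} (hx : x ∈ pfrBad T E) :
    T x ∈ pfrBad T E := by
  intro ε hε
  rw [frequently_atTop]
  intro a
  obtain ⟨m, hm, hlt⟩ := (frequently_atTop.mp (hx (ε/2) (by linarith))) (max (a+1) 2)
  refine ⟨m - 1, ?_, ?_⟩
  · omega
  · have hm2 : 2 ≤ m := le_trans (le_max_right _ _) hm
    obtain ⟨n, rfl⟩ : ∃ n, m = n + 1 := ⟨m - 1, by omega⟩
    simp only [Nat.add_sub_cancel]
    have h1 := pfrCount_mono_le T E n x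
    have h2 : (ε/2) * (n+1 : ℕ) ≤ ε * n := by
      have : (2:ℝ) ≤ (n+1 : ℕ) := by exact_mod_cast hm2
      push_cast at this ⊢
      nlinarith
    calc pfrCount T E n (T x) ≤ pfrCount T E (n + 1) x := h1
      _ < (ε/2) * (n+1 : ℕ) := hlt
      _ ≤ ε * n := h2

lemma pfrBad_bwd (T : X → X) (E : Set X) {x : X} (hx : T x ∈ pfrBad T E) :
    x ∈ pfrBad T E := by
  intro ε hε
  rw [frequently_atTop]
  intro a
  obtain ⟨K, hK⟩ := exists_nat_gt (2 / ε)
  obtain ⟨n, hn, hlt⟩ := (frequently_atTop.mp (hx (ε/2) (by linarith))) (max a K)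
  refine ⟨n + 1, by omega, ?_⟩
  have h2 := pfrCount_succ_le T E n x
  have hnK : (K : ℝ) ≤ n := by exact_mod_cast le_trans (le_max_right _ _) hn
  have h3 : (2:ℝ)/ε < n := lt_of_lt_of_le hK hnK
  have h4 : 1 ≤ ε/2 * n := by
    rw [div_lt_iff₀ hε] at h3
    nlinarith
  have : pfrCount T E (n+1) x < ε/2 * n + 1 := by linarith
  calc pfrCount T E (n+1) x < ε/2 * n + 1 := this
    _ ≤ ε * n + ε := by nlinarith
    _ = ε * (n+1 : ℕ) := by push_cast; ring

lemma pfrBad_iter_mem (T : X → X) (E : Set X) {x : X} (hx : x ∈ pfrBad T E) (i : ℕ) :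
    T^[i] x ∈ pfrBad T E := by
  induction i with
  | zero => exact hx
  | succ i ih => rw [Function.iterate_succ_apply']; exact pfrBad_fwd T E ih

lemma pfrBad_of_iter (T : X → X) (E : Set X) {x : X} {i : ℕ}
    (hx : T^[i] x ∈ pfrBad T E) : x ∈ pfrBad T E := by
  induction i with
  | zero => exact hx
  | succ i ih =>
    rw [Function.iterate_succ_apply'] at hx
    exact ih (pfrBad_bwd T E hx)

lemma measurable_pfrBad {T : X → X} (hT : Measurable T) {E : Set X}
    (hE : MeasurableSet E) : MeasurableSet (pfrBad T E) := by
  have : pfrBad T E = ⋂ (k : ℕ), ⋂ (N : ℕ), ⋃ (n : ℕ), ⋃ (_ : N ≤ n),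
      {x | pfrCount T E n x < (1 / (k + 1 : ℝ)) * n} := by
    ext x
    simp only [Set.mem_iInter, Set.mem_iUnion, Set.mem_setOf_eq]
    constructor
    · intro hx k N
      obtain ⟨n, hn, hlt⟩ := (frequently_atTop.mp
        (hx (1/(k+1:ℝ)) (by positivity))) N
      exact ⟨n, hn, hlt⟩
    · intro hx ε hε
      rw [frequently_atTop]
      intro a
      obtain ⟨k, hk⟩ := exists_nat_one_div_lt hε
      obtain ⟨n, hn, hlt⟩ := hx k (max a 1)
      refine ⟨n, le_trans (le_max_left _ _) hn, ?_⟩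
      have hn1 : (1:ℝ) ≤ n := by exact_mod_cast le_trans (le_max_right _ _) hn
      calc pfrCount T E n x < (1/(k+1:ℝ)) * n := hlt
        _ ≤ ε * n := by push_cast at hk ⊢; nlinarith
  rw [this]
  refine MeasurableSet.iInter fun k => MeasurableSet.iInter fun N =>
    MeasurableSet.iUnion fun n => MeasurableSet.iUnion fun _ =>
      measurableSet_lt (measurable_pfrCount hT hE n) measurable_const

/-- The key measure estimate: the bad set meets `E` in a null set. -/
lemma pfr_bad_null {μ : Measure X} [IsProbabilityMeasure μ] {T : X → X}
    (hT : MeasurePreserving T μ μ) {E : Set X} (hE : MeasurableSet E) :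
    μ (E ∩ pfrBad T E) = 0 := by
  set A := pfrBad T E with hA
  have hAm : MeasurableSet A := measurable_pfrBad hT.measurable hE
  -- main estimate for each ε > 0
  have key : ∀ ε : ℝ, 0 < ε → μ (E ∩ A) ≤ ENNReal.ofReal ε := by
    intro ε hε
    set g : X → ℝ := A.indicator (fun x => ε - E.indicator (fun _ => (1:ℝ)) x) with hg
    have hgm : Measurable g :=
      (measurable_const.sub ((measurable_const (a := (1:ℝ))).indicator hE)).indicator hAm
    have hgb : ∀ x, |g x| ≤ ε + 1 := by
      intro x
      rw [hg]
      by_cases hx : x ∈ A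
      · rw [Set.indicator_of_mem hx]
        by_cases he : x ∈ E
        · rw [Set.indicator_of_mem he]
          rw [abs_le]; constructor <;> simp <;> linarith
        · rw [Set.indicator_of_notMem he]
          rw [abs_le]; constructor <;> simp <;> linarith
      · rw [Set.indicator_of_notMem hx]
        simp; linarith
    -- value of g on A
    have hgA : ∀ x ∈ A, g x = ε - (if x ∈ E then (1:ℝ) else 0) := by
      intro x hx
      rw [hg, Set.indicator_of_mem hx, Set.indicator_apply]
    -- Birkhoff sums of g on A
    have hbirkA : ∀ x ∈ A, ∀ n, pfrBirk T g n x = ε * n - pfrCount T E n x := by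
      intro x hx n
      rw [pfrBirk, pfrCount_eq_sum]
      have : ∀ i ∈ Finset.range n, g (T^[i] x)
          = ε - (if T^[i] x ∈ E then (1:ℝ) else 0) := fun i _ =>
        hgA _ (pfrBad_iter_mem T E hx i)
      rw [Finset.sum_congr rfl this, Finset.sum_sub_distrib]
      simp [mul_comm]
    -- Birkhoff sums vanish off A
    have hbirkNA : ∀ x, x ∉ A → ∀ n, pfrBirk T g n x = 0 := by
      intro x hx n
      rw [pfrBirk]
      apply Finset.sum_eq_zero
      intro i _
      have : T^[i] x ∉ A := fun h => hx (pfrBad_of_iter T E h)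
      rw [hg, Set.indicator_of_notMem this]
    set M : ℕ → Set X := fun N => {x | 0 < pfrMax T g N x} with hM
    have hMm : ∀ N, MeasurableSet (M N) := fun N =>
      measurableSet_lt measurable_const (measurable_pfrMax hT.measurable hgm N)
    have hMsubA : ∀ N, M N ⊆ A := by
      intro N x hx
      obtain ⟨k, hk, he⟩ := pfrMax_eq_birk T g N x
      by_contra hxA
      have hx' : 0 < pfrMax T g N x := hx
      rw [he, hbirkNA x hxA k] at hx'
      exact lt_irrefl 0 hx'
    have hAsubM : A ⊆ ⋃ N, M N := by
      intro x hx
      obtain ⟨n, hn, hlt⟩ := (frequently_atTop.mp (hx ε hε)) 1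
      refine Set.mem_iUnion.mpr ⟨n, ?_⟩
      have hb : pfrBirk T g n x = ε * n - pfrCount T E n x := hbirkA x hx n
      have : 0 < pfrBirk T g n x := by rw [hb]; linarith
      exact lt_of_lt_of_le this (pfrBirk_le_pfrMax T g le_rfl x)
    -- integral estimate on M N
    have hest : ∀ N, μ (E ∩ M N) ≤ ENNReal.ofReal ε := by
      intro N
      have h0 : 0 ≤ ∫ x in M N, g x ∂μ :=
        pfr_maximal hT hgm (by linarith) hgb N
      have hcongr : ∫ x in M N, g x ∂μ
          = ∫ x in M N, (ε - E.indicator (fun _ => (1:ℝ)) x) ∂μ := by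
        apply setIntegral_congr_fun (hMm N)
        intro x hx
        rw [hg, Set.indicator_of_mem (hMsubA N hx)]
      have hsplit : ∫ x in M N, (ε - E.indicator (fun _ => (1:ℝ)) x) ∂μ
          = ε * (μ (M N)).toReal - (μ (M N ∩ E)).toReal := by
        rw [integral_sub (integrableOn_const (μ := μ) (s := M N) (C := ε) (measure_ne_top μ _))
          ((integrable_indicator_iff hE).mpr (integrableOn_const (μ := μ) (s := E) (C := (1:ℝ))
            (measure_ne_top μ _))).integrableOn]
        rw [setIntegral_const, setIntegral_indicator hE, setIntegral_const]
        simp [smul_eq_mul, mul_comm, Measure.real]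
      have h1 : (μ (M N ∩ E)).toReal ≤ ε * (μ (M N)).toReal := by
        rw [hcongr, hsplit] at h0; linarith
      have h2 : (μ (M N)).toReal ≤ 1 := by
        have := prob_le_one (μ := μ) (s := M N)
        exact ENNReal.toReal_le_of_le_ofReal zero_le_one (by simpa using this)
      have h3 : (μ (E ∩ M N)).toReal ≤ ε := by
        rw [Set.inter_comm]
        nlinarith [ENNReal.toReal_nonneg (a := μ (M N ∩ E))]
      exact (ENNReal.le_ofReal_iff_toReal_le (measure_ne_top μ _) (by linarith)).mpr h3
    -- combine via continuity from below
    have hmono : Monotone M := by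
      intro N N' h x hx
      exact lt_of_lt_of_le hx (pfrMax_mono T g h x)
    have hsub : E ∩ A ⊆ ⋃ N, E ∩ M N := by
      intro x ⟨hxE, hxA⟩
      obtain ⟨N, hN⟩ := Set.mem_iUnion.mp (hAsubM hxA)
      exact Set.mem_iUnion.mpr ⟨N, hxE, hN⟩
    calc μ (E ∩ A) ≤ μ (⋃ N, E ∩ M N) := measure_mono hsub
      _ = ⨆ N, μ (E ∩ M N) := by
          apply Directed.measure_iUnion
          exact (Monotone.directed_le fun a b h => Set.inter_subset_inter_right E (hmono h))
      _ ≤ ENNReal.ofReal ε := iSup_le hest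
  -- conclude
  by_contra h
  have hpos : 0 < μ (E ∩ A) := pos_iff_ne_zero.mpr h
  have hne : μ (E ∩ A) ≠ ⊤ := measure_ne_top μ _
  have htR : 0 < (μ (E ∩ A)).toReal := ENNReal.toReal_pos h hne
  have := key ((μ (E ∩ A)).toReal / 2) (by linarith)
  have h2 : μ (E ∩ A) ≤ ENNReal.ofReal ((μ (E ∩ A)).toReal / 2) := this
  have h3 : (μ (E ∩ A)).toReal ≤ (μ (E ∩ A)).toReal / 2 := by
    have := ENNReal.toReal_mono (by exact ENNReal.ofReal_ne_top) h2
    calc (μ (E ∩ A)).toReal ≤ (ENNReal.ofReal ((μ (E ∩ A)).toReal / 2)).toReal := this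
      _ = (μ (E ∩ A)).toReal / 2 := ENNReal.toReal_ofReal (by linarith)
  linarith

end PFRAux

/-- Positive-frequency recurrence: for a measure-preserving (not necessarily ergodic)
transformation of a probability space and a set `E` of positive measure, `μ`-a.e. point
of `E` visits `E` with positive lower asymptotic frequency. -/
theorem positive_frequency_recurrence {X : Type*} [MeasurableSpace X] {μ : Measure X}
    [IsProbabilityMeasure μ] (T : X → X) (hT : MeasurePreserving T μ μ)
    (E : Set X) (hE : MeasurableSet E) (hEpos : 0 < μ E) :
    ∀ᵐ x ∂(μ.restrict E),
      0 < liminf (fun n : ℕ =>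
        (((Finset.range n).filter (fun i => T^[i] x ∈ E)).card : ℝ) / n) atTop := by
  rw [ae_iff, Measure.restrict_apply' hE]
  apply measure_mono_null _ (pfr_bad_null hT hE)
  rintro x ⟨hbad, hxE⟩
  refine ⟨hxE, ?_⟩
  simp only [Set.mem_setOf_eq, not_lt] at hbad
  -- from liminf ≤ 0, derive frequent smallness
  intro ε hε
  set a : ℕ → ℝ := fun n =>
    (((Finset.range n).filter (fun i => T^[i] x ∈ E)).card : ℝ) / n with ha
  have hcob : IsCoboundedUnder (· ≥ ·) atTop a := by
    apply isCoboundedUnder_ge_of_le atTop (x := 1)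
    intro n
    simp only [ha]
    rcases Nat.eq_zero_or_pos n with rfl | hn
    · simp
    · apply div_le_one_of_le₀
      · have := Finset.card_filter_le (Finset.range n) (fun i => T^[i] x ∈ E)
        rw [Finset.card_range] at this
        exact_mod_cast this
      · positivity
  have hfreq : ∃ᶠ n in atTop, a n < ε := frequently_lt_of_liminf_lt hcob
    (lt_of_le_of_lt hbad hε)
  have := hfreq.and_eventually (eventually_ge_atTop 1)
  apply this.mono
  rintro n ⟨hlt, hn1⟩
  have hn : (0:ℝ) < n := by exact_mod_cast hn1
  have : pfrCount T E n x / n < ε := hlt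
  rw [div_lt_iff₀ hn] at this
  calc pfrCount T E n x < ε * n := this
    _ ≤ ε * n := le_rfl
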